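/- Let S, p : [0,T] → ℝ be absolutely continuous with S'(t)(S(t) - p(t)) ≤ 0 for a.e. t. Then for all t ∈ [0,T], |S(t) - p(t)| + ∫_0^t |S'(τ)| · 1_{S(τ) ≠ p(τ)} dτ ≤ |S(0) - p(0)| + ∫_0^t |p'(τ)| dτ. -/

import Mathlib

open MeasureTheory

open Set Filter intervalIntegral in
/-- Slope of `f` at `x` evaluated at `x + 1/(n+1)`. -/
private lemma slope_eval {f : ℝ → ℝ} (x : ℝ) (n : ℕ) :
    slope f x (x + 1/(n+1)) = (n+1 : ℝ) * (f (x + 1/(n+1)) - f x) := by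
  have h0 : (0:ℝ) < 1/(n+1) := by positivity
  rw [slope_def_field, add_sub_cancel_left, div_div_eq_mul_div, div_one, mul_comm]

open Set Filter intervalIntegral in
private lemma seq_tendsto_nhdsNe (c : ℝ) :
    Tendsto (fun n : ℕ => c + 1/(n+1 : ℝ)) atTop (nhdsWithin c {c}ᶜ) := by
  apply tendsto_nhdsWithin_of_tendsto_nhds_of_eventually_within
  · have h : Tendsto (fun n : ℕ => 1 / ((n:ℝ) + 1)) atTop (nhds 0) :=
      tendsto_one_div_add_atTop_nhds_zero_nat
    simpa using tendsto_const_nhds.add h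
  · filter_upwards with n
    have : (0:ℝ) < 1/(n+1 : ℝ) := by positivity
    simp only [Set.mem_compl_iff, Set.mem_singleton_iff]
    intro hc
    nlinarith [hc]

open Set Filter intervalIntegral in
private lemma avg_tendsto {g : ℝ → ℝ} (hg : Continuous g) (c : ℝ) :
    Tendsto (fun n : ℕ => (n+1 : ℝ) * ∫ x in c..(c + 1/(n+1)), g x) atTop (nhds (g c)) := by
  have hF : HasDerivAt (fun u => ∫ x in c..u, g x) (g c) c :=
    intervalIntegral.integral_hasDerivAt_right (hg.intervalIntegrable _ _)
      (hg.stronglyMeasurable.stronglyMeasurableAtFilter) hg.continuousAt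
  have hslope := hasDerivAt_iff_tendsto_slope.1 hF
  have := hslope.comp (seq_tendsto_nhdsNe c)
  refine this.congr fun n => ?_
  rw [Function.comp_apply, slope_eval, intervalIntegral.integral_same, sub_zero]

open Set Filter intervalIntegral in
/-- Fundamental theorem of calculus for (globally) Lipschitz functions. -/
private lemma lipschitz_integral_deriv {L : NNReal} {g : ℝ → ℝ} (hg : LipschitzWith L g)
    {a b : ℝ} (hab : a ≤ b) : ∫ x in a..b, deriv g x = g b - g a := by
  have hgc : Continuous g := hg.continuous
  set F : ℕ → ℝ → ℝ := fun n x => (n+1 : ℝ) * (g (x + 1/(n+1)) - g x) with hFdef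
  have hint : ∀ u v : ℝ, IntervalIntegrable g volume u v := fun u v => hgc.intervalIntegrable u v
  have step1 : ∀ n : ℕ, ∫ x in a..b, F n x
      = (n+1 : ℝ) * ((∫ x in b..(b + 1/(n+1)), g x) - ∫ x in a..(a + 1/(n+1)), g x) := by
    intro n
    have hcomp : (∫ x in a..b, g (x + 1/(n+1))) = ∫ x in (a + 1/(n+1))..(b + 1/(n+1)), g x :=
      intervalIntegral.integral_comp_add_right g _
    have split1 : (∫ x in a..(a+1/(n+1)), g x) + (∫ x in (a+1/(n+1))..(b+1/(n+1)), g x)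
        = ∫ x in a..(b+1/(n+1)), g x :=
      intervalIntegral.integral_add_adjacent_intervals (hint _ _) (hint _ _)
    have split2 : (∫ x in a..b, g x) + (∫ x in b..(b+1/(n+1)), g x) = ∫ x in a..(b+1/(n+1)), g x :=
      intervalIntegral.integral_add_adjacent_intervals (hint _ _) (hint _ _)
    have h1 : IntervalIntegrable (fun x => g (x + 1/(n+1))) volume a b := by
      exact (hgc.comp (continuous_id.add continuous_const)).intervalIntegrable a b
    have isub : ∫ x in a..b, F n x
        = (n+1:ℝ) * ((∫ x in a..b, g (x + 1/(n+1))) - ∫ x in a..b, g x) := by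
      simp only [hFdef]
      rw [← intervalIntegral.integral_sub h1 (hint _ _),
        ← intervalIntegral.integral_const_mul]
    rw [isub, hcomp]
    have : (∫ x in (a + 1/(n+1))..(b + 1/(n+1)), g x) - ∫ x in a..b, g x
        = (∫ x in b..(b + 1/(n+1)), g x) - ∫ x in a..(a + 1/(n+1)), g x := by linarith
    rw [this]
  have hRHS : Tendsto (fun n => ∫ x in a..b, F n x) atTop (nhds (g b - g a)) := by
    have := (avg_tendsto hgc b).sub (avg_tendsto hgc a)
    refine this.congr fun n => ?_
    rw [step1 n]; ring
  have hLHS : Tendsto (fun n => ∫ x in a..b, F n x) atTop (nhds (∫ x in a..b, deriv g x)) := by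
    have hrw : ∀ h : ℝ → ℝ, (∫ x in a..b, h x) = ∫ x in Set.Ioc a b, h x := fun h =>
      intervalIntegral.integral_of_le hab
    simp only [hrw]
    apply MeasureTheory.tendsto_integral_of_dominated_convergence (fun _ => (L:ℝ))
    · intro n
      exact ((continuous_const.mul ((hgc.comp (continuous_id.add continuous_const)).sub
        hgc))).aestronglyMeasurable
    · exact integrableOn_const measure_Ioc_lt_top.ne
    · intro n
      filter_upwards with x
      have h0 : (0:ℝ) < 1/(n+1:ℝ) := by positivity
      have hb : |g (x + 1/(n+1)) - g x| ≤ (L:ℝ) * (1/(n+1)) := by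
        have := hg.dist_le_mul (x + 1/(n+1)) x
        rw [Real.dist_eq, Real.dist_eq] at this
        simpa [abs_of_pos (show (0:ℝ) < ((n:ℝ)+1)⁻¹ by positivity)] using this
      have : |F n x| = (n+1:ℝ) * |g (x + 1/(n+1)) - g x| := by
        rw [hFdef]; rw [abs_mul, abs_of_pos (by positivity : (0:ℝ) < (n:ℝ)+1)]
      rw [Real.norm_eq_abs, this]
      calc (n+1:ℝ) * |g (x + 1/(n+1)) - g x| ≤ (n+1:ℝ) * ((L:ℝ) * (1/(n+1))) := by
            apply mul_le_mul_of_nonneg_left hb (by positivity)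
        _ = (L:ℝ) := by field_simp
    · have hdiff : ∀ᵐ x ∂volume, DifferentiableAt ℝ g x := hg.ae_differentiableAt_of_real
      apply ae_restrict_of_ae
      filter_upwards [hdiff] with x hx
      have hder : HasDerivAt g (deriv g x) x := hx.hasDerivAt
      have hslope := hasDerivAt_iff_tendsto_slope.1 hder
      have := hslope.comp (seq_tendsto_nhdsNe x)
      refine this.congr fun n => ?_
      rw [Function.comp_apply, slope_eval]
  exact tendsto_nhds_unique hLHS hRHS

theorem stmt8 (T : ℝ) (hT : 0 < T) (K₁ K₂ : NNReal) (S p : ℝ → ℝ)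
    (hS : LipschitzOnWith K₁ S (Set.Icc 0 T)) (hp : LipschitzOnWith K₂ p (Set.Icc 0 T))
    (h : ∀ᵐ t ∂(volume.restrict (Set.Ioo (0:ℝ) T)), deriv S t * (S t - p t) ≤ 0) :
    ∀ t ∈ Set.Icc 0 T,
      |S t - p t| +
        ∫ τ in (0:ℝ)..t, |deriv S τ| * Set.indicator {τ : ℝ | S τ ≠ p τ} (fun _ => (1:ℝ)) τ
      ≤ |S 0 - p 0| + ∫ τ in (0:ℝ)..t, |deriv p τ| := by
  classical
  obtain ⟨Sg, hSg, hSeq⟩ := hS.extend_real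
  obtain ⟨pg, hpg, hpeq⟩ := hp.extend_real
  set u : ℝ → ℝ := fun x => Sg x - pg x with hu_def
  set f : ℝ → ℝ := fun x => |u x| with hf_def
  have hu_lip : LipschitzWith (K₁ + K₂) u := hSg.sub hpg
  have hf_lip : LipschitzWith (K₁ + K₂) f := by
    have := lipschitzWith_one_norm.comp hu_lip
    rw [one_mul] at this
    exact this
  have hSgc : Continuous Sg := hSg.continuous
  have hpgc : Continuous pg := hpg.continuous
  have hu_cont : Continuous u := hSgc.sub hpgc
  -- derivatives of original functions agree with derivatives of extensions on the interior
  have hnhds : ∀ τ ∈ Set.Ioo (0:ℝ) T, Set.Icc (0:ℝ) T ∈ nhds τ := fun τ hτ =>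
    mem_nhds_iff.2 ⟨Set.Ioo 0 T, Set.Ioo_subset_Icc_self, isOpen_Ioo, hτ⟩
  have hderivS : ∀ τ ∈ Set.Ioo (0:ℝ) T, deriv S τ = deriv Sg τ := fun τ hτ =>
    Filter.EventuallyEq.deriv_eq (Filter.eventuallyEq_of_mem (hnhds τ hτ) hSeq)
  have hderivp : ∀ τ ∈ Set.Ioo (0:ℝ) T, deriv p τ = deriv pg τ := fun τ hτ =>
    Filter.EventuallyEq.deriv_eq (Filter.eventuallyEq_of_mem (hnhds τ hτ) hpeq)
  -- measurability facts
  have hmS : Measurable (deriv Sg) := measurable_deriv Sg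
  have hmp : Measurable (deriv pg) := measurable_deriv pg
  have hsetm : MeasurableSet {τ : ℝ | Sg τ ≠ pg τ} := (isOpen_ne_fun hSgc hpgc).measurableSet
  set ψ : ℝ → ℝ := fun τ => |deriv Sg τ| * Set.indicator {τ : ℝ | Sg τ ≠ pg τ} (fun _ => (1:ℝ)) τ
    with hψ_def
  set φ : ℝ → ℝ := fun τ => |deriv pg τ| - ψ τ with hφ_def
  have hmψ : Measurable ψ :=
    hmS.abs.mul (measurable_const.indicator hsetm)
  have hmφ : Measurable φ := hmp.abs.sub hmψ
  have hbS : ∀ x, |deriv Sg x| ≤ (K₁ : ℝ) := fun x => by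
    simpa [Real.norm_eq_abs] using norm_deriv_le_of_lipschitz (𝕜 := ℝ) hSg (x₀ := x)
  have hbp : ∀ x, |deriv pg x| ≤ (K₂ : ℝ) := fun x => by
    simpa [Real.norm_eq_abs] using norm_deriv_le_of_lipschitz (𝕜 := ℝ) hpg (x₀ := x)
  have hbψ : ∀ x, |ψ x| ≤ (K₁ : ℝ) := fun x => by
    simp only [hψ_def, Set.indicator_apply]
    split_ifs with hx
    · simpa [abs_mul, abs_abs] using hbS x
    · simp
  -- main step
  intro t ht
  have hIoo_sub : Set.Ioo (0:ℝ) t ⊆ Set.Ioo 0 T := Set.Ioo_subset_Ioo le_rfl ht.2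
  -- key a.e. inequality on Ioo 0 T
  have key : ∀ᵐ τ ∂(volume.restrict (Set.Ioo (0:ℝ) T)), deriv f τ ≤ φ τ := by
    have hdS : ∀ᵐ τ ∂(volume.restrict (Set.Ioo (0:ℝ) T)), DifferentiableAt ℝ Sg τ :=
      ae_restrict_of_ae hSg.ae_differentiableAt_of_real
    have hdp : ∀ᵐ τ ∂(volume.restrict (Set.Ioo (0:ℝ) T)), DifferentiableAt ℝ pg τ :=
      ae_restrict_of_ae hpg.ae_differentiableAt_of_real
    have hdf : ∀ᵐ τ ∂(volume.restrict (Set.Ioo (0:ℝ) T)), DifferentiableAt ℝ f τ :=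
      ae_restrict_of_ae hf_lip.ae_differentiableAt_of_real
    have hmem : ∀ᵐ τ ∂(volume.restrict (Set.Ioo (0:ℝ) T)), τ ∈ Set.Ioo (0:ℝ) T :=
      ae_restrict_mem measurableSet_Ioo
    filter_upwards [h, hdS, hdp, hdf, hmem] with τ hτ0 hτS hτp hτf hτmem
    have hSeqτ : S τ = Sg τ := hSeq (Set.Ioo_subset_Icc_self hτmem)
    have hpeqτ : p τ = pg τ := hpeq (Set.Ioo_subset_Icc_self hτmem)
    have hτ0' : deriv Sg τ * u τ ≤ 0 := by
      rw [← hderivS τ hτmem, hu_def]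
      simpa [hSeqτ, hpeqτ] using hτ0
    by_cases hzero : u τ = 0
    · -- f has a global minimum at τ, so deriv f τ = 0
      have hmin : IsLocalMin f τ := by
        have hall : ∀ x, f τ ≤ f x := fun x => by
          simp only [hf_def, hzero, abs_zero]
          exact abs_nonneg _
        exact Filter.Eventually.of_forall hall
      have hd0 : deriv f τ = 0 := hmin.deriv_eq_zero
      rw [hd0]
      have hτnot : τ ∉ {τ : ℝ | Sg τ ≠ pg τ} := by
        simp only [Set.mem_setOf_eq, not_not]
        have : Sg τ - pg τ = 0 := hzero
        linarith
      simp only [hφ_def, hψ_def, Set.indicator_of_notMem hτnot, mul_zero, sub_zero]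
      exact abs_nonneg _
    · -- u τ ≠ 0
      have hτin : τ ∈ {τ : ℝ | Sg τ ≠ pg τ} := by
        simp only [Set.mem_setOf_eq]
        intro hc
        exact hzero (by rw [hu_def]; simp [hc])
      have hψτ : ψ τ = |deriv Sg τ| := by
        simp [hψ_def, Set.indicator_of_mem hτin]
      have hderiv_u : HasDerivAt u (deriv Sg τ - deriv pg τ) τ :=
        hτS.hasDerivAt.sub hτp.hasDerivAt
      rcases lt_or_gt_of_ne hzero with hneg | hpos
      · -- u τ < 0 : f = -u near τ
        have hev : ∀ᶠ x in nhds τ, u x < 0 :=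
          hu_cont.continuousAt.eventually_lt continuousAt_const hneg
        have hfeq : f =ᶠ[nhds τ] (fun x => -u x) := by
          filter_upwards [hev] with x hx
          simp [hf_def, abs_of_neg hx]
        have hder : deriv f τ = -(deriv Sg τ - deriv pg τ) := by
          rw [hfeq.deriv_eq]
          exact (hderiv_u.neg).deriv
        have hSnn : 0 ≤ deriv Sg τ := by nlinarith
        rw [hder]
        simp only [hφ_def]
        rw [hψτ, abs_of_nonneg hSnn]
        linarith [neg_abs_le (deriv pg τ), le_abs_self (deriv pg τ)]
      · -- u τ > 0 : f = u near τ
        have hev : ∀ᶠ x in nhds τ, 0 < u x :=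
          continuousAt_const.eventually_lt hu_cont.continuousAt hpos
        have hfeq : f =ᶠ[nhds τ] u := by
          filter_upwards [hev] with x hx
          simp [hf_def, abs_of_pos hx]
        have hder : deriv f τ = deriv Sg τ - deriv pg τ := by
          rw [hfeq.deriv_eq]
          exact hderiv_u.deriv
        have hSnp : deriv Sg τ ≤ 0 := by nlinarith
        rw [hder]
        simp only [hφ_def]
        rw [hψτ, abs_of_nonpos hSnp]
        linarith [neg_abs_le (deriv pg τ), le_abs_self (deriv pg τ)]
  -- integrability on Ioo 0 t
  have hmf : Measurable (deriv f) := measurable_deriv f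
  have hbf : ∀ x, |deriv f x| ≤ ((K₁ + K₂ : NNReal) : ℝ) := fun x => by
    simpa [Real.norm_eq_abs] using norm_deriv_le_of_lipschitz (𝕜 := ℝ) hf_lip (x₀ := x)
  have hconst_int : ∀ C : ℝ, IntegrableOn (fun _ => C) (Set.Ioo (0:ℝ) t) volume := fun C =>
    integrableOn_const measure_Ioo_lt_top.ne
  have hint_f : IntegrableOn (deriv f) (Set.Ioo (0:ℝ) t) volume := by
    refine Integrable.mono' (hconst_int ((K₁ + K₂ : NNReal) : ℝ))
      (hmf.aestronglyMeasurable.restrict) ?_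
    filter_upwards with x
    simpa [Real.norm_eq_abs] using hbf x
  have hint_ψ : IntegrableOn ψ (Set.Ioo (0:ℝ) t) volume := by
    refine Integrable.mono' (hconst_int (K₁ : ℝ)) (hmψ.aestronglyMeasurable.restrict) ?_
    filter_upwards with x
    simpa [Real.norm_eq_abs] using hbψ x
  have hint_p : IntegrableOn (fun τ => |deriv pg τ|) (Set.Ioo (0:ℝ) t) volume := by
    refine Integrable.mono' (hconst_int (K₂ : ℝ)) (hmp.abs.aestronglyMeasurable.restrict) ?_
    filter_upwards with x
    simpa [Real.norm_eq_abs, abs_abs] using hbp x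
  have hint_φ : IntegrableOn φ (Set.Ioo (0:ℝ) t) volume := hint_p.sub hint_ψ
  -- FTC for f
  have hftc : ∫ x in (0:ℝ)..t, deriv f x = f t - f 0 := lipschitz_integral_deriv hf_lip ht.1
  have hIoc_Ioo : ∀ g : ℝ → ℝ, (∫ x in (0:ℝ)..t, g x) = ∫ x in Set.Ioo (0:ℝ) t, g x := fun g => by
    rw [intervalIntegral.integral_of_le ht.1, integral_Ioc_eq_integral_Ioo]
  -- compare integrals
  have hmono : (∫ x in Set.Ioo (0:ℝ) t, deriv f x) ≤ ∫ x in Set.Ioo (0:ℝ) t, φ x := by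
    apply setIntegral_mono_ae_restrict hint_f hint_φ
    exact ae_restrict_of_ae_restrict_of_subset hIoo_sub key
  have hsplit : (∫ x in Set.Ioo (0:ℝ) t, φ x)
      = (∫ x in Set.Ioo (0:ℝ) t, |deriv pg x|) - ∫ x in Set.Ioo (0:ℝ) t, ψ x :=
    integral_sub hint_p hint_ψ
  -- rewrite statement integrals in terms of extensions
  have heq1 : (∫ τ in (0:ℝ)..t, |deriv S τ| * Set.indicator {τ : ℝ | S τ ≠ p τ} (fun _ => (1:ℝ)) τ)
      = ∫ x in Set.Ioo (0:ℝ) t, ψ x := by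
    rw [hIoc_Ioo]
    apply setIntegral_congr_fun measurableSet_Ioo
    intro x hx
    have hxT : x ∈ Set.Ioo (0:ℝ) T := hIoo_sub hx
    have hd : deriv S x = deriv Sg x := hderivS x hxT
    have hind : Set.indicator {τ : ℝ | S τ ≠ p τ} (fun _ => (1:ℝ)) x
        = Set.indicator {τ : ℝ | Sg τ ≠ pg τ} (fun _ => (1:ℝ)) x := by
      have hSx : S x = Sg x := hSeq (Set.Ioo_subset_Icc_self hxT)
      have hpx : p x = pg x := hpeq (Set.Ioo_subset_Icc_self hxT)
      simp only [Set.indicator_apply, Set.mem_setOf_eq, hSx, hpx]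
    simp only [hψ_def, hd, hind]
  have heq2 : (∫ τ in (0:ℝ)..t, |deriv p τ|) = ∫ x in Set.Ioo (0:ℝ) t, |deriv pg x| := by
    rw [hIoc_Ioo]
    apply setIntegral_congr_fun measurableSet_Ioo
    intro x hx
    have hxT : x ∈ Set.Ioo (0:ℝ) T := hIoo_sub hx
    show |deriv p x| = |deriv pg x|
    rw [hderivp x hxT]
  -- endpoints
  have h0mem : (0:ℝ) ∈ Set.Icc (0:ℝ) T := ⟨le_rfl, hT.le⟩
  have hft : |S t - p t| = f t := by
    rw [hf_def, hu_def]; simp [hSeq ht, hpeq ht]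
  have hf0 : |S 0 - p 0| = f 0 := by
    rw [hf_def, hu_def]; simp [hSeq h0mem, hpeq h0mem]
  rw [hft, hf0, heq1, heq2]
  have := hftc
  rw [hIoc_Ioo] at this
  linarith [hmono, hsplit, this]
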